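/- The clock network N_8({1,3}) is linearly 3-solvable; that is, there exists an 11×3 matrix over ℤ_3 whose first three rows form I_3, whose last three rows (rows 9, 10, 11) form I_3, and in which every row k with 4 ≤ k ≤ 11 is a ℤ_3-linear combination of rows k−1 and k−3. -/

import Mathlib

/-- `M` is an `R`-circuit matrix of length `n` over `ℤ_s`: an `(n+r) × r` matrix whose
first `r` rows form `I_r`, and such that every row `k` with `r < k ≤ n+r` (1-indexed;
here 0-indexed `r ≤ k < n+r`) is a `ℤ_s`-linear combination of the rows with indices in
`{k - d : d ∈ R}`. -/
def IsCircuitMatrix (R : Finset ℕ) (r n s : ℕ)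
    (M : Matrix (Fin (n + r)) (Fin r) (ZMod s)) : Prop :=
  (∀ i j : Fin r, M ⟨(i : ℕ), by have := i.isLt; omega⟩ j
      = if i = j then (1 : ZMod s) else 0) ∧
  ∀ k : ℕ, r ≤ k → ∀ hk : k < n + r, ∃ lam : ℕ → ZMod s,
    ∀ j : Fin r, M ⟨k, hk⟩ j = ∑ d ∈ R, lam d * M ⟨k - d, by omega⟩ j

/-- The clock network `N_n(R)` is linearly `s`-solvable: there is an `R`-circuit matrix
of length `n` over `ℤ_s` whose last `r` rows also form `I_r`. -/
def LinearlySolvable (R : Finset ℕ) (r n s : ℕ) : Prop :=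
  ∃ M : Matrix (Fin (n + r)) (Fin r) (ZMod s),
    IsCircuitMatrix R r n s M ∧
    ∀ i j : Fin r, M ⟨n + (i : ℕ), by have := i.isLt; omega⟩ j
      = if i = j then (1 : ZMod s) else 0

def myM : Matrix (Fin (8 + 3)) (Fin 3) (ZMod 3) :=
  !![1,0,0; 0,1,0; 0,0,1; 1,0,1; 1,1,1; 1,1,2; 2,1,0; 0,2,1; 1,0,0; 0,1,0; 0,0,1]

/-- The clock network `N_8({1,3})` is linearly `3`-solvable. -/
theorem clock13_eight_linearlySolvable_three : LinearlySolvable {1, 3} 3 8 3 := by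
  refine ⟨myM, ⟨by decide, ?_⟩, by decide⟩
  intro k hk hkk
  refine ⟨fun _ => 1, ?_⟩
  interval_cases k <;> intro j <;> fin_cases j <;> decide +revert
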